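/- arXiv:1002.0992 — 2 statements merged into one kernel-verified Lean document; each statement's English description precedes it below -/
import Mathlib

section
/- The function ρ(σ) = σ - tanh(√c₁ σ + c₂)/√c₁ (for constants c₁ > 0, c₂) satisfies the third-order ODE ρ''' = (3/(2ρ'))·(ρ'')² - ((ρ'-1)/(ρ-σ))·ρ'' + 2(ρ'-1)ρ'(ρ'+1)/(ρ-σ)², wherever ρ' ≠ 0 and ρ ≠ σ. -/
open Real

lemma tanh_hasDerivAt' (s c₂ x : ℝ) :
    HasDerivAt (fun y => Real.tanh (s * y + c₂))
      (s * (1 - Real.tanh (s * x + c₂) ^ 2)) x := by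
  have hu : HasDerivAt (fun y => s * y + c₂) s x := by
    simpa using ((hasDerivAt_id x).const_mul s).add_const c₂
  have hs : HasDerivAt (fun y => Real.sinh (s * y + c₂))
      (Real.cosh (s * x + c₂) * s) x := (Real.hasDerivAt_sinh _).comp x hu
  have hc : HasDerivAt (fun y => Real.cosh (s * y + c₂))
      (Real.sinh (s * x + c₂) * s) x := (Real.hasDerivAt_cosh _).comp x hu
  have hcne : Real.cosh (s * x + c₂) ≠ 0 := (Real.cosh_pos _).ne'
  have := hs.fun_div hc hcne
  have heq : (fun y => Real.sinh (s * y + c₂) / Real.cosh (s * y + c₂))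
      = fun y => Real.tanh (s * y + c₂) := by
    funext y; rw [Real.tanh_eq_sinh_div_cosh]
  rw [heq] at this
  refine this.congr_deriv (Eq.symm ?_)
  rw [Real.tanh_eq_sinh_div_cosh]
  have h2 : Real.cosh (s * x + c₂) ^ 2 - Real.sinh (s * x + c₂) ^ 2 = 1 :=
    Real.cosh_sq_sub_sinh_sq _
  field_simp

/-- ρ(σ) = σ - tanh(√c₁ σ + c₂)/√c₁ satisfies the governing third-order ODE. -/
theorem tanh_solution_satisfies_governing_ODE (c₁ c₂ : ℝ) (hc₁ : 0 < c₁)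
    (ρ : ℝ → ℝ)
    (hρ : ρ = fun σ => σ - Real.tanh (Real.sqrt c₁ * σ + c₂) / Real.sqrt c₁)
    (σ : ℝ) (h1 : Real.tanh (Real.sqrt c₁ * σ + c₂) ≠ 0)
    (h2 : deriv ρ σ ≠ 0) :
    deriv (deriv (deriv ρ)) σ =
      3 / (2 * deriv ρ σ) * (deriv (deriv ρ) σ) ^ 2
      - (deriv ρ σ - 1) / (ρ σ - σ) * deriv (deriv ρ) σ
      + 2 * ((deriv ρ σ - 1) * deriv ρ σ * (deriv ρ σ + 1)) / (ρ σ - σ) ^ 2 := by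
  set s := Real.sqrt c₁ with hs
  have hspos : 0 < s := Real.sqrt_pos.mpr hc₁
  have hsne : s ≠ 0 := hspos.ne'
  set t : ℝ → ℝ := fun y => Real.tanh (s * y + c₂) with ht
  -- first derivative
  have hd1 : deriv ρ = fun y => (t y) ^ 2 := by
    funext y
    have h : HasDerivAt ρ (1 - (s * (1 - t y ^ 2)) / s) y := by
      rw [hρ]
      exact (hasDerivAt_id y).sub ((tanh_hasDerivAt' s c₂ y).div_const s)
    rw [h.deriv]; field_simp; ring
  have hd2 : deriv (deriv ρ) = fun y => 2 * t y * (s * (1 - t y ^ 2)) := by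
    funext y
    rw [hd1]
    have h : HasDerivAt (fun y => (t y) ^ 2) (2 * t y * (s * (1 - t y ^ 2))) y := by
      have := (tanh_hasDerivAt' s c₂ y).fun_pow 2
      simpa [ht, mul_comm, mul_assoc, mul_left_comm] using this
    exact h.deriv
  have hd3 : deriv (deriv (deriv ρ)) σ
      = 2 * s ^ 2 * (1 - t σ ^ 2) * (1 - 3 * t σ ^ 2) := by
    rw [hd2]
    have h : HasDerivAt (fun y => 2 * t y * (s * (1 - t y ^ 2)))
        (2 * s ^ 2 * (1 - t σ ^ 2) * (1 - 3 * t σ ^ 2)) σ := by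
      have hT := tanh_hasDerivAt' s c₂ σ
      have h1' : HasDerivAt (fun y => 2 * t y) (2 * (s * (1 - t σ ^ 2))) σ :=
        hT.const_mul 2
      have h2' : HasDerivAt (fun y => s * (1 - (t y) ^ 2))
          (s * (0 - 2 * t σ * (s * (1 - t σ ^ 2)))) σ := by
        exact ((hasDerivAt_const σ (1:ℝ)).sub (hT.pow 2 |>.congr_deriv (by ring))).const_mul s
      have := h1'.fun_mul h2'
      refine this.congr_deriv (Eq.symm ?_)
      ring
    exact h.deriv
  have hρσ : ρ σ - σ = -(t σ) / s := by rw [hρ]; simp [ht]; ring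
  have htne : t σ ≠ 0 := h1
  have hrne : ρ σ - σ ≠ 0 := by
    rw [hρσ]; exact div_ne_zero (neg_ne_zero.mpr htne) hsne
  rw [hd3, hρσ, hd2, hd1]
  simp only
  have hd1ne : t σ ^ 2 ≠ 0 := pow_ne_zero 2 htne
  field_simp
  ring_nf
end

section
/- Suppose ρ(σ) satisfies ρ'' ≠ 0 and the product γ⁽¹⁾γ⁽²⁾ := (ρ'−1)²/(ερ') − (ρ−σ)²(ρ'')²/(4ε(ρ')³) is constant on an interval (ε = ±1 a fixed sign). Then ρ satisfies the governing equation ρ''' = (3/(2ρ'))(ρ'')² − ((ρ'−1)/(ρ−σ))ρ'' + 2(ρ'−1)ρ'(ρ'+1)/(ρ−σ)². Conversely, if ρ satisfies the governing equation then this product is constant. -/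
lemma hasDerivAt_F (ε : ℝ) (hε0 : ε ≠ 0) (ρ : ℝ → ℝ) (σ r : ℝ)
    (hρσ : ρ σ - σ ≠ 0) (hp0 : deriv ρ σ ≠ 0)
    (hp : HasDerivAt ρ (deriv ρ σ) σ)
    (hq : HasDerivAt (deriv ρ) (deriv (deriv ρ) σ) σ)
    (hr : HasDerivAt (deriv (deriv ρ)) r σ) :
    HasDerivAt (fun s => (deriv ρ s - 1) ^ 2 / (ε * deriv ρ s)
        - (ρ s - s) ^ 2 * (deriv (deriv ρ) s) ^ 2 / (4 * ε * (deriv ρ s) ^ 3))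
      (-((ρ σ - σ) ^ 2 * deriv (deriv ρ) σ / (2 * ε * (deriv ρ σ) ^ 3)) *
        (r - (3 / (2 * deriv ρ σ) * (deriv (deriv ρ) σ) ^ 2
          - (deriv ρ σ - 1) / (ρ σ - σ) * deriv (deriv ρ) σ
          + 2 * ((deriv ρ σ - 1) * deriv ρ σ * (deriv ρ σ + 1)) / (ρ σ - σ) ^ 2))) σ := by
  set p := deriv ρ σ with hpdef
  set q := deriv (deriv ρ) σ with hqdef
  have hεp : ε * p ≠ 0 := mul_ne_zero hε0 hp0
  have hden : 4 * ε * p ^ 3 ≠ 0 := by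
    apply mul_ne_zero (mul_ne_zero (by norm_num) hε0) (pow_ne_zero _ hp0)
  have hA : HasDerivAt (fun s => (deriv ρ s - 1) ^ 2 / (ε * deriv ρ s))
      ((2 * (p - 1) ^ 1 * q * (ε * p) - (p - 1) ^ 2 * (ε * q)) / (ε * p) ^ 2) σ :=
    ((hq.sub_const 1).pow 2).div (hq.const_mul ε) hεp
  have hid : HasDerivAt (fun s : ℝ => ρ s - s) (p - 1) σ := hp.sub (hasDerivAt_id σ)
  have hB := ((hid.pow 2).mul (hr.pow 2)).div ((hq.pow 3).const_mul (4 * ε)) hden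
  have := hA.sub hB
  convert this using 1
  · rfl
  · rfl
  · funext s
    simp only [Pi.sub_apply, Pi.div_apply, Pi.mul_apply, Pi.pow_apply]
  · simp only [Pi.mul_apply, Pi.pow_apply, ← hpdef, ← hqdef]
    field_simp
    ring

/-- Equivalence: γ⁽¹⁾γ⁽²⁾ constant ↔ the governing third-order ODE, when ρ'' ≠ 0. -/
theorem product_constant_iff_governing_ODE (a b ε : ℝ) (hε : ε = 1 ∨ ε = -1)
    (ρ : ℝ → ℝ) (hρ : ContDiffOn ℝ 3 ρ (Set.Ioo a b))
    (h1 : ∀ σ ∈ Set.Ioo a b, deriv ρ σ ≠ 0)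
    (h2 : ∀ σ ∈ Set.Ioo a b, ρ σ - σ ≠ 0)
    (h3 : ∀ σ ∈ Set.Ioo a b, deriv (deriv ρ) σ ≠ 0) :
    (∃ K : ℝ, ∀ σ ∈ Set.Ioo a b,
        (deriv ρ σ - 1) ^ 2 / (ε * deriv ρ σ)
          - (ρ σ - σ) ^ 2 * (deriv (deriv ρ) σ) ^ 2 / (4 * ε * (deriv ρ σ) ^ 3)
          = K) ↔
    (∀ σ ∈ Set.Ioo a b,
      deriv (deriv (deriv ρ)) σ =
        3 / (2 * deriv ρ σ) * (deriv (deriv ρ) σ) ^ 2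
        - (deriv ρ σ - 1) / (ρ σ - σ) * deriv (deriv ρ) σ
        + 2 * ((deriv ρ σ - 1) * deriv ρ σ * (deriv ρ σ + 1)) / (ρ σ - σ) ^ 2) := by
  have hε0 : ε ≠ 0 := by rcases hε with h | h <;> rw [h] <;> norm_num
  set F : ℝ → ℝ := fun s => (deriv ρ s - 1) ^ 2 / (ε * deriv ρ s)
      - (ρ s - s) ^ 2 * (deriv (deriv ρ) s) ^ 2 / (4 * ε * (deriv ρ s) ^ 3) with hF
  have hρ1 : ContDiffOn ℝ 2 (deriv ρ) (Set.Ioo a b) := by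
    apply hρ.deriv_of_isOpen isOpen_Ioo; norm_num
  have hρ2 : ContDiffOn ℝ 1 (deriv (deriv ρ)) (Set.Ioo a b) := by
    apply hρ1.deriv_of_isOpen isOpen_Ioo; norm_num
  have hdiff : ∀ σ ∈ Set.Ioo a b, HasDerivAt ρ (deriv ρ σ) σ := fun σ hσ =>
    (((hρ.differentiableOn (by norm_num)).differentiableAt
      (isOpen_Ioo.mem_nhds hσ)).hasDerivAt)
  have hdiff1 : ∀ σ ∈ Set.Ioo a b, HasDerivAt (deriv ρ) (deriv (deriv ρ) σ) σ := fun σ hσ =>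
    (((hρ1.differentiableOn (by norm_num)).differentiableAt
      (isOpen_Ioo.mem_nhds hσ)).hasDerivAt)
  have hdiff2 : ∀ σ ∈ Set.Ioo a b,
      HasDerivAt (deriv (deriv ρ)) (deriv (deriv (deriv ρ)) σ) σ := fun σ hσ =>
    (((hρ2.differentiableOn (by norm_num)).differentiableAt
      (isOpen_Ioo.mem_nhds hσ)).hasDerivAt)
  have key : ∀ σ ∈ Set.Ioo a b, HasDerivAt F
      (-((ρ σ - σ) ^ 2 * deriv (deriv ρ) σ / (2 * ε * (deriv ρ σ) ^ 3)) *
        (deriv (deriv (deriv ρ)) σ - (3 / (2 * deriv ρ σ) * (deriv (deriv ρ) σ) ^ 2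
          - (deriv ρ σ - 1) / (ρ σ - σ) * deriv (deriv ρ) σ
          + 2 * ((deriv ρ σ - 1) * deriv ρ σ * (deriv ρ σ + 1)) / (ρ σ - σ) ^ 2))) σ :=
    fun σ hσ => hasDerivAt_F ε hε0 ρ σ _ (h2 σ hσ) (h1 σ hσ)
      (hdiff σ hσ) (hdiff1 σ hσ) (hdiff2 σ hσ)
  have hfac : ∀ σ ∈ Set.Ioo a b,
      -((ρ σ - σ) ^ 2 * deriv (deriv ρ) σ / (2 * ε * (deriv ρ σ) ^ 3)) ≠ 0 := by
    intro σ hσ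
    apply neg_ne_zero.2
    exact div_ne_zero (mul_ne_zero (pow_ne_zero _ (h2 σ hσ)) (h3 σ hσ))
      (mul_ne_zero (mul_ne_zero (by norm_num) hε0) (pow_ne_zero _ (h1 σ hσ)))
  constructor
  · rintro ⟨K, hK⟩ σ hσ
    have hconst : HasDerivAt F 0 σ := by
      have : F =ᶠ[nhds σ] fun _ => K :=
        Filter.eventuallyEq_of_mem (isOpen_Ioo.mem_nhds hσ) hK
      exact (hasDerivAt_const σ K).congr_of_eventuallyEq this
    have h0 := (key σ hσ).unique hconst
    have := (mul_eq_zero.1 h0).resolve_left (hfac σ hσ)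
    linarith [sub_eq_zero.1 this]
  · intro hODE
    rcases lt_or_ge a b with hab | hab
    · have hx0 : (a + b) / 2 ∈ Set.Ioo a b := ⟨by linarith, by linarith⟩
      refine ⟨F ((a + b) / 2), fun σ hσ => ?_⟩
      have hzero : ∀ x ∈ Set.Ioo a b, HasDerivAt F 0 x := by
        intro x hx
        have := key x hx
        rw [hODE x hx] at this
        simpa using this
      have hFdiff : DifferentiableOn ℝ F (Set.Ioo a b) := fun x hx =>
        (hzero x hx).differentiableAt.differentiableWithinAt
      have hfd : ∀ x ∈ Set.Ioo a b, fderivWithin ℝ F (Set.Ioo a b) x = 0 := by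
        intro x hx
        have h0 : HasFDerivWithinAt F (0 : ℝ →L[ℝ] ℝ) (Set.Ioo a b) x := by
          have h := (hzero x hx).hasFDerivAt.hasFDerivWithinAt
            (s := Set.Ioo a b)
          convert h using 1
          · rfl
          ext
          simp
        exact h0.fderivWithin (isOpen_Ioo.uniqueDiffWithinAt hx)
      exact (convex_Ioo a b).is_const_of_fderivWithin_eq_zero hFdiff hfd hσ hx0
    · exact ⟨0, fun σ hσ => absurd hσ (by rw [Set.Ioo_eq_empty (not_lt.2 hab)]; simp)⟩
end
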